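/- Expected character of the interchange process with general rates: ∑_{π∈G_n} p^B_t(π)·χ(π) = trace(exp(−t·A)), where A = ∑_{1≤i<j≤n} b_{ij}·(id_V − ρ((i j))) is a linear endomorphism of V and exp is the exponential of endomorphisms of the finite-dimensional space V. (Equivalently, the expectation of χ under the law of the rate-B interchange process at time t equals ∑_i e^{−t·ρ_i} over the eigenvalues ρ_1,…,ρ_{dim V} of A counted with multiplicity.) -/

import Mathlib

noncomputable section

namespace ICAux

open NormedSpace

variable {G : Type*} [Group G] [Fintype G] [DecidableEq G]
variable {d : Type*} [Fintype d] [DecidableEq d]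

/-- The matrix on the group whose `(σ, τ)` entry is `y (σ * τ⁻¹)`. -/
def Rmat (y : G → ℂ) : Matrix G G ℂ := Matrix.of fun σ τ => y (σ * τ⁻¹)

/-- Convolution of functions on a group. -/
def conv (y z : G → ℂ) : G → ℂ := fun x => ∑ a : G, y a * z (a⁻¹ * x)

/-- Dirac delta at the identity. -/
def delta : G → ℂ := fun x => if x = 1 then 1 else 0

/-- Convolution powers. -/
def cpow (y : G → ℂ) : ℕ → (G → ℂ)
  | 0 => delta
  | k + 1 => conv (cpow y k) y

lemma Rmat_delta : Rmat (delta (G := G)) = 1 := by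
  ext σ τ
  simp [Rmat, delta, Matrix.one_apply, mul_inv_eq_one]

lemma Rmat_conv (y z : G → ℂ) : Rmat (conv y z) = Rmat y * Rmat z := by
  ext σ τ
  simp only [Rmat, conv, Matrix.mul_apply, Matrix.of_apply]
  refine Fintype.sum_equiv ((Equiv.inv G).trans (Equiv.mulRight σ)) _ _ fun a => ?_
  simp only [Equiv.trans_apply, Equiv.inv_apply, Equiv.coe_mulRight]
  congr 1
  · congr 1
    group
  · congr 1
    group

lemma Rmat_cpow (y : G → ℂ) (k : ℕ) : Rmat (cpow y k) = Rmat y ^ k := by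
  induction k with
  | zero => simpa [cpow] using Rmat_delta
  | succ k ih => rw [cpow, Rmat_conv, ih, pow_succ]

/-- Apply a matrix-valued multiplicative function to a function on the group. -/
def Emat (N : G →* Matrix d d ℂ) (y : G → ℂ) : Matrix d d ℂ := ∑ g : G, y g • N g

/-- Variant of `Emat` with inverted argument. -/
def Emat' (N : G →* Matrix d d ℂ) (y : G → ℂ) : Matrix d d ℂ := ∑ g : G, y g • N g⁻¹

lemma Emat'_delta (N : G →* Matrix d d ℂ) : Emat' N delta = 1 := by
  simp [Emat', delta, ite_smul]

lemma Emat'_conv (N : G →* Matrix d d ℂ) (y z : G → ℂ) :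
    Emat' N (conv y z) = Emat' N z * Emat' N y := by
  have hR : Emat' N z * Emat' N y
      = ∑ a : G, ∑ c : G, (y a * z c) • (N c⁻¹ * N a⁻¹) := by
    rw [Emat', Emat', Finset.sum_mul_sum, Finset.sum_comm]
    refine Finset.sum_congr rfl fun a _ => Finset.sum_congr rfl fun c _ => ?_
    rw [smul_mul_assoc, mul_smul_comm, smul_smul, mul_comm (z c) (y a)]
  rw [hR, Emat']
  simp only [conv, Finset.sum_smul]
  rw [Finset.sum_comm]
  refine Finset.sum_congr rfl fun a _ => ?_
  refine Fintype.sum_equiv (Equiv.mulLeft a⁻¹) _ _ fun x => ?_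
  simp only [Equiv.coe_mulLeft]
  congr 1
  rw [← map_mul]
  congr 1
  group

lemma Emat'_cpow (N : G →* Matrix d d ℂ) (y : G → ℂ) (k : ℕ) :
    Emat' N (cpow y k) = Emat' N y ^ k := by
  induction k with
  | zero => simpa [cpow] using Emat'_delta N
  | succ k ih => rw [cpow, Emat'_conv, ih, ← pow_succ']

lemma Emat'_eq_Emat (N : G →* Matrix d d ℂ) (y : G → ℂ) (hy : ∀ g, y g⁻¹ = y g) :
    Emat' N y = Emat N y := by
  refine Fintype.sum_equiv (Equiv.inv G) _ _ fun g => ?_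
  simp [hy]

lemma key (N : G →* Matrix d d ℂ) (y : G → ℂ) (hy : ∀ g, y g⁻¹ = y g) (k : ℕ) :
    ∑ π : G, (Rmat y ^ k) 1 π * (N π).trace = (Emat N y ^ k).trace := by
  rw [← Rmat_cpow, ← Emat'_eq_Emat N y hy, ← Emat'_cpow]
  have : (Emat' N (cpow y k)).trace = ∑ g : G, cpow y k g * (N g⁻¹).trace := by
    simp [Emat', Matrix.trace_sum, Matrix.trace_smul, smul_eq_mul]
  rw [this]
  refine Fintype.sum_equiv (Equiv.inv G) _ _ fun π => ?_
  simp [Rmat]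

lemma main (N : G →* Matrix d d ℂ) (y : G → ℂ) (hy : ∀ g, y g⁻¹ = y g) :
    ∑ π : G, (exp (Rmat y)) 1 π * (N π).trace = (exp (Emat N y)).trace := by
  letI : SeminormedRing (Matrix G G ℂ) := Matrix.linftyOpSemiNormedRing
  letI : NormedRing (Matrix G G ℂ) := Matrix.linftyOpNormedRing
  letI : NormedAlgebra ℂ (Matrix G G ℂ) := Matrix.linftyOpNormedAlgebra
  letI : SeminormedRing (Matrix d d ℂ) := Matrix.linftyOpSemiNormedRing
  letI : NormedRing (Matrix d d ℂ) := Matrix.linftyOpNormedRing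
  letI : NormedAlgebra ℂ (Matrix d d ℂ) := Matrix.linftyOpNormedAlgebra
  have hsum1 : Summable (fun k : ℕ => (k.factorial⁻¹ : ℂ) • Rmat y ^ k) :=
    expSeries_summable' (𝕂 := ℂ) (Rmat y)
  have hsum2 : Summable (fun k : ℕ => (k.factorial⁻¹ : ℂ) • Emat N y ^ k) :=
    expSeries_summable' (𝕂 := ℂ) (Emat N y)
  let Λ : Matrix G G ℂ →ₗ[ℂ] ℂ :=
    { toFun := fun M => ∑ π : G, M 1 π * (N π).trace
      map_add' := fun M M' => by
        simp [Matrix.add_apply, add_mul, Finset.sum_add_distrib]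
      map_smul' := fun c M => by
        simp [Matrix.smul_apply, smul_eq_mul, Finset.mul_sum, mul_assoc] }
  let Λc : Matrix G G ℂ →L[ℂ] ℂ := LinearMap.toContinuousLinearMap Λ
  let Tc : Matrix d d ℂ →L[ℂ] ℂ :=
    LinearMap.toContinuousLinearMap (Matrix.traceLinearMap d ℂ ℂ)
  have hL : ∑ π : G, (exp (Rmat y)) 1 π * (N π).trace = Λc (exp (Rmat y)) := rfl
  have hR : (exp (Emat N y)).trace = Tc (exp (Emat N y)) := rfl
  rw [hL, hR, exp_eq_tsum ℂ, exp_eq_tsum ℂ, Λc.map_tsum hsum1, Tc.map_tsum hsum2]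
  refine tsum_congr fun k => ?_
  have h1 : Λc ((k.factorial⁻¹ : ℂ) • Rmat y ^ k)
      = (k.factorial⁻¹ : ℂ) • Λc (Rmat y ^ k) := map_smul _ _ _
  have h2 : Tc ((k.factorial⁻¹ : ℂ) • Emat N y ^ k)
      = (k.factorial⁻¹ : ℂ) • Tc (Emat N y ^ k) := map_smul _ _ _
  rw [h1, h2]
  congr 1
  exact key N y hy k

end ICAux

open Classical in
/-- The generator (Laplacian) of the interchange process with rates `B`:
`L^B(σ,σ) = ∑_{i<j} b_{ij}`, `L^B(σ,τ) = -b_{ij}` if `τσ⁻¹ = (i j)`, `0` otherwise. -/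
def rateL (n : ℕ) (B : Matrix (Fin n) (Fin n) ℝ) :
    Matrix (Equiv.Perm (Fin n)) (Equiv.Perm (Fin n)) ℝ :=
  Matrix.of fun σ τ =>
    ∑ p ∈ Finset.univ.filter (fun p : Fin n × Fin n => p.1 < p.2),
      B p.1 p.2 * ((if σ = τ then 1 else 0) - (if τ * σ⁻¹ = Equiv.swap p.1 p.2 then 1 else 0))

namespace ICAux

open NormedSpace

/-- The function on the symmetric group generating `rateL` (complexified). -/
def ellFun (n : ℕ) (B : Matrix (Fin n) (Fin n) ℝ) : Equiv.Perm (Fin n) → ℂ := fun g =>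
  ∑ p ∈ Finset.univ.filter (fun p : Fin n × Fin n => p.1 < p.2),
    ((B p.1 p.2 : ℝ) : ℂ) * ((if g = 1 then 1 else 0) - (if g = Equiv.swap p.1 p.2 then 1 else 0))

/-- `ellFun` scaled by `-t`. -/
def yFun (n : ℕ) (B : Matrix (Fin n) (Fin n) ℝ) (t : ℝ) : Equiv.Perm (Fin n) → ℂ :=
  fun g => (-(t : ℂ)) * ellFun n B g

lemma ellFun_symm (n : ℕ) (B : Matrix (Fin n) (Fin n) ℝ) (g : Equiv.Perm (Fin n)) :
    ellFun n B g⁻¹ = ellFun n B g := by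
  simp only [ellFun, inv_eq_iff_eq_inv, Equiv.swap_inv, inv_one]

lemma yFun_symm (n : ℕ) (B : Matrix (Fin n) (Fin n) ℝ) (t : ℝ) (g : Equiv.Perm (Fin n)) :
    yFun n B t g⁻¹ = yFun n B t g := by
  simp only [yFun, ellFun_symm]

lemma map_rateL (n : ℕ) (B : Matrix (Fin n) (Fin n) ℝ) (t : ℝ) :
    ((-t) • rateL n B).map (algebraMap ℝ ℂ) = Rmat (yFun n B t) := by
  ext σ τ
  simp only [Matrix.map_apply, Matrix.smul_apply, rateL, Matrix.of_apply, Rmat, smul_eq_mul,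
    yFun, ellFun, Complex.coe_algebraMap, Complex.ofReal_mul, Complex.ofReal_neg,
    Complex.ofReal_sum, Complex.ofReal_sub, apply_ite (Complex.ofReal), Complex.ofReal_one,
    Complex.ofReal_zero]
  congr 1
  refine Finset.sum_congr rfl fun p _ => ?_
  congr 1
  congr 1
  · exact if_congr (mul_inv_eq_one (a := σ) (b := τ)).symm rfl rfl
  · refine if_congr ?_ rfl rfl
    constructor
    · intro h
      rw [← Equiv.swap_inv p.1 p.2, ← h, mul_inv_rev, inv_inv]
    · intro h
      rw [← Equiv.swap_inv p.1 p.2, ← h, mul_inv_rev, inv_inv]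

lemma coe_exp_entry (n : ℕ) (B : Matrix (Fin n) (Fin n) ℝ) (t : ℝ)
    (σ τ : Equiv.Perm (Fin n)) :
    ((exp ((-t) • rateL n B)) σ τ : ℂ) = (exp (Rmat (yFun n B t))) σ τ := by
  letI : SeminormedRing (Matrix (Equiv.Perm (Fin n)) (Equiv.Perm (Fin n)) ℝ) :=
    Matrix.linftyOpSemiNormedRing
  letI : NormedRing (Matrix (Equiv.Perm (Fin n)) (Equiv.Perm (Fin n)) ℝ) :=
    Matrix.linftyOpNormedRing
  letI : NormedAlgebra ℝ (Matrix (Equiv.Perm (Fin n)) (Equiv.Perm (Fin n)) ℝ) :=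
    Matrix.linftyOpNormedAlgebra
  letI : SeminormedRing (Matrix (Equiv.Perm (Fin n)) (Equiv.Perm (Fin n)) ℂ) :=
    Matrix.linftyOpSemiNormedRing
  letI : NormedRing (Matrix (Equiv.Perm (Fin n)) (Equiv.Perm (Fin n)) ℂ) :=
    Matrix.linftyOpNormedRing
  letI : NormedAlgebra ℝ (Matrix (Equiv.Perm (Fin n)) (Equiv.Perm (Fin n)) ℂ) :=
    Matrix.linftyOpNormedAlgebra
  letI : NormedAlgebra ℚ (Matrix (Equiv.Perm (Fin n)) (Equiv.Perm (Fin n)) ℝ) :=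
    NormedAlgebra.restrictScalars ℚ ℝ _
  letI : NormedAlgebra ℚ (Matrix (Equiv.Perm (Fin n)) (Equiv.Perm (Fin n)) ℂ) :=
    NormedAlgebra.restrictScalars ℚ ℝ _
  have hcont : Continuous ((algebraMap ℝ ℂ).mapMatrix :
      Matrix (Equiv.Perm (Fin n)) (Equiv.Perm (Fin n)) ℝ →+*
        Matrix (Equiv.Perm (Fin n)) (Equiv.Perm (Fin n)) ℂ) := by
    apply continuous_matrix
    intro i j
    exact Complex.continuous_ofReal.comp ((continuous_apply j).comp (continuous_apply i))
  calc ((exp ((-t) • rateL n B)) σ τ : ℂ)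
      = ((algebraMap ℝ ℂ).mapMatrix (exp ((-t) • rateL n B))) σ τ := rfl
    _ = (exp ((algebraMap ℝ ℂ).mapMatrix ((-t) • rateL n B))) σ τ := by
        exact congrArg (fun M => M σ τ) (map_exp _ hcont _)
    _ = (exp ((algebraMap ℝ ℂ).mapMatrix ((-t) • rateL n B))) σ τ := by
        rfl
    _ = (exp (Rmat (yFun n B t))) σ τ := by
        rw [RingHom.mapMatrix_apply, map_rateL]

/-- The matrix form of a representation, as a monoid hom. -/
def repMat {G : Type*} [Group G] (V : Type) [AddCommGroup V] [Module ℂ V]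
    [FiniteDimensional ℂ V] (ρ : Representation ℂ G V) :
    G →* Matrix (Fin (Module.finrank ℂ V)) (Fin (Module.finrank ℂ V)) ℂ where
  toFun g := LinearMap.toMatrix (Module.finBasis ℂ V) (Module.finBasis ℂ V) (ρ g)
  map_one' := by
    rw [_root_.map_one ρ, LinearMap.toMatrix_one]
  map_mul' g h := by
    rw [_root_.map_mul ρ, LinearMap.toMatrix_mul]

end ICAux

open ICAux in
/-- Expected character of the interchange process with general rates:
`∑_π p^B_t(π) χ(π) = trace(exp(-t A))` where `A = ∑_{i<j} b_{ij}(id - ρ((i j)))`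
(the exponential computed via the matrix of `A` in a basis of `V`). -/
theorem expected_character_interchange (n : ℕ) (hn : 1 ≤ n)
    (B : Matrix (Fin n) (Fin n) ℝ) (hBsymm : B.IsSymm)
    (hBpos : ∀ i j : Fin n, i ≠ j → 0 < B i j)
    (V : Type) [AddCommGroup V] [Module ℂ V] [FiniteDimensional ℂ V] [Nontrivial V]
    (ρ : Representation ℂ (Equiv.Perm (Fin n)) V)
    (hirr : IsSimpleModule (MonoidAlgebra ℂ (Equiv.Perm (Fin n))) ρ.asModule)
    (t : ℝ) (ht : 0 ≤ t) :
    ∑ π : Equiv.Perm (Fin n),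
        (NormedSpace.exp ((-t) • rateL n B) 1 π : ℂ) * LinearMap.trace ℂ V (ρ π) =
      Matrix.trace (NormedSpace.exp
        ((-(t : ℂ)) • LinearMap.toMatrix (Module.finBasis ℂ V) (Module.finBasis ℂ V)
          (∑ p ∈ Finset.univ.filter (fun p : Fin n × Fin n => p.1 < p.2),
            ((B p.1 p.2 : ℝ) : ℂ) • (LinearMap.id - ρ (Equiv.swap p.1 p.2))))) := by
  classical
  set b := Module.finBasis ℂ V with hb
  set N := repMat V ρ with hNdef
  have hN : ∀ g, N g = LinearMap.toMatrix b b (ρ g) := fun g => rfl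
  have htr : ∀ π : Equiv.Perm (Fin n),
      LinearMap.trace ℂ V (ρ π) = (N π).trace := fun π => by
    rw [hN π]
    exact LinearMap.trace_eq_matrix_trace ℂ b (ρ π)
  have hemat : Emat N (yFun n B t)
      = (-(t : ℂ)) • LinearMap.toMatrix b b
          (∑ p ∈ Finset.univ.filter (fun p : Fin n × Fin n => p.1 < p.2),
            ((B p.1 p.2 : ℝ) : ℂ) • (LinearMap.id - ρ (Equiv.swap p.1 p.2))) := by
    have h1 : Emat N (ellFun n B)
        = LinearMap.toMatrix b b
            (∑ p ∈ Finset.univ.filter (fun p : Fin n × Fin n => p.1 < p.2),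
              ((B p.1 p.2 : ℝ) : ℂ) • (LinearMap.id - ρ (Equiv.swap p.1 p.2))) := by
      rw [map_sum]
      calc Emat N (ellFun n B)
          = ∑ g : Equiv.Perm (Fin n),
              ∑ p ∈ Finset.univ.filter (fun p : Fin n × Fin n => p.1 < p.2),
                (((B p.1 p.2 : ℝ) : ℂ) * ((if g = 1 then 1 else 0)
                  - (if g = Equiv.swap p.1 p.2 then 1 else 0))) • N g := by
            simp [Emat, ellFun, Finset.sum_smul]
        _ = ∑ p ∈ Finset.univ.filter (fun p : Fin n × Fin n => p.1 < p.2),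
              ∑ g : Equiv.Perm (Fin n),
                (((B p.1 p.2 : ℝ) : ℂ) * ((if g = 1 then 1 else 0)
                  - (if g = Equiv.swap p.1 p.2 then 1 else 0))) • N g := Finset.sum_comm
        _ = _ := by
            refine Finset.sum_congr rfl fun p _ => ?_
            rw [map_smul, map_sub, LinearMap.toMatrix_id, ← hN]
            simp [mul_sub, sub_smul, mul_ite, mul_one, mul_zero, ite_smul, zero_smul,
              Finset.sum_sub_distrib, smul_sub, map_one]
    have h2 : Emat N (yFun n B t) = (-(t : ℂ)) • Emat N (ellFun n B) := by
      simp [Emat, yFun, Finset.smul_sum, mul_smul]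
    rw [h2, h1]
  calc ∑ π : Equiv.Perm (Fin n),
        (NormedSpace.exp ((-t) • rateL n B) 1 π : ℂ) * LinearMap.trace ℂ V (ρ π)
      = ∑ π : Equiv.Perm (Fin n),
          (NormedSpace.exp (Rmat (yFun n B t))) 1 π * (N π).trace := by
        refine Finset.sum_congr rfl fun π _ => ?_
        rw [htr π, coe_exp_entry]
    _ = (NormedSpace.exp (Emat N (yFun n B t))).trace :=
        main N (yFun n B t) (yFun_symm n B t)
    _ = _ := by rw [hemat]

end
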